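/- Let C be a regular, irreducible curve that is projective over a field k with H^0(C, O_C) = k, with function field F = k(C) and arithmetic genus t = dim_k H^1(C, O_C). Let D be a divisor on C of degree e ≥ 1, let n be the smallest integer such that n·e > 2t + e − 2, and set S̃ = |D| ∪ { P in C : H^0(C, O_C(nD − P)) ≠ {0} }. Then the map K₂(F) → ∐_{P ∉ S̃} k(P)^* induced by the tame symbol is surjective, and the cokernel of the tame symbol T : K₂(F) → ∐_{P ∈ C} k(P)^* is generated by the image of ∐_{P ∈ S̃} k(P)^*. -/

import Mathlib

open scoped TensorProduct

noncomputable section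

/-- The set of Steinberg relations in `Fˣ ⊗_ℤ Fˣ` (written additively):
the elements `a ⊗ b` with `a + b = 1` in `F`. -/
def SteinbergSet (F : Type*) [Field F] :
    Set (TensorProduct ℤ (Additive Fˣ) (Additive Fˣ)) :=
  { x | ∃ a b : Fˣ, (a : F) + (b : F) = 1 ∧
      x = Additive.ofMul a ⊗ₜ[ℤ] Additive.ofMul b }

/-- Milnor's `K₂` of a field, via Matsumoto's presentation. -/
abbrev K2 (F : Type*) [Field F] :=
  (TensorProduct ℤ (Additive Fˣ) (Additive Fˣ)) ⧸
    Submodule.span ℤ (SteinbergSet F)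

/-- The symbol `{f, g}` in `K₂(F)`. -/
def symbol {F : Type*} [Field F] (f g : Fˣ) : K2 F :=
  Submodule.Quotient.mk (Additive.ofMul f ⊗ₜ[ℤ] Additive.ofMul g)

/-- The degree of a divisor `D` on the curve: `∑_P deg(P) · D(P)`,
where `deg P = [k(P) : k]`. -/
def divDeg (k : Type*) [Field k] {Pt : Type*} (res : Pt → Type*)
    [∀ P, Field (res P)] [∀ P, Algebra k (res P)] (D : Pt →₀ ℤ) : ℤ :=
  ∑ᶠ P, (Module.finrank k (res P) : ℤ) * D P

/-- Axioms for a regular, irreducible curve `C`, projective over a field `k`, with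
`H⁰(C, O_C) = k`, presented through: its function field `F = k(C)`, its set `Pt` of
closed points, the residue fields `res P = k(P)`, the normalized valuations `ord P`,
the evaluation maps `ev P` (evaluation at `P` of functions regular at `P`), the
Riemann-Roch spaces `L D = H⁰(C, O_C(D))`, and the arithmetic genus
`t = dim_k H¹(C, O_C)`, characterized by the Riemann-Roch relations. -/
structure IsProjCurve (k F : Type*) [Field k] [Field F] [Algebra k F]
    {Pt : Type*} (res : Pt → Type*) [∀ P, Field (res P)] [∀ P, Algebra k (res P)]
    (ord : Pt → F → ℤ) (ev : ∀ P, F → res P)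
    (L : (Pt →₀ ℤ) → Submodule k F) (t : ℕ) : Prop where
  finiteDimensional_res : ∀ P, FiniteDimensional k (res P)
  ord_mul : ∀ P (f g : F), f ≠ 0 → g ≠ 0 → ord P (f * g) = ord P f + ord P g
  ord_add : ∀ P (f g : F), f ≠ 0 → g ≠ 0 → f + g ≠ 0 →
      min (ord P f) (ord P g) ≤ ord P (f + g)
  ord_algebraMap : ∀ P (c : k), c ≠ 0 → ord P (algebraMap k F c) = 0
  ord_uniformizer : ∀ P, ∃ f : F, f ≠ 0 ∧ ord P f = 1
  ord_separates : ∀ P Q, (∀ f : F, ord P f = ord Q f) → P = Q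
  support_finite : ∀ f : F, f ≠ 0 → {P | ord P f ≠ 0}.Finite
  degree_formula : ∀ f : F, f ≠ 0 →
      ∑ᶠ P, (Module.finrank k (res P) : ℤ) * ord P f = 0
  ev_zero : ∀ P, ev P 0 = 0
  ev_one : ∀ P, ev P 1 = 1
  ev_add : ∀ P (f g : F), f ≠ 0 → g ≠ 0 → 0 ≤ ord P f → 0 ≤ ord P g →
      ev P (f + g) = ev P f + ev P g
  ev_mul : ∀ P (f g : F), f ≠ 0 → g ≠ 0 → 0 ≤ ord P f → 0 ≤ ord P g →
      ev P (f * g) = ev P f * ev P g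
  ev_algebraMap : ∀ P (c : k), ev P (algebraMap k F c) = algebraMap k (res P) c
  ev_eq_zero_iff : ∀ P (f : F), f ≠ 0 → 0 ≤ ord P f → (ev P f = 0 ↔ 0 < ord P f)
  ev_surjective : ∀ P (y : res P), ∃ f : F, f ≠ 0 ∧ 0 ≤ ord P f ∧ ev P f = y
  mem_L : ∀ (D : Pt →₀ ℤ) (f : F), f ∈ L D ↔ (f ≠ 0 → ∀ P, 0 ≤ D P + ord P f)
  finiteDimensional_L : ∀ D, FiniteDimensional k (L D)
  global_sections : ∀ f : F, f ∈ L 0 ↔ ∃ c : k, algebraMap k F c = f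
  rr_ineq : ∀ D : Pt →₀ ℤ,
      divDeg k res D + 1 - t ≤ (Module.finrank k (L D) : ℤ)
  rr_eq : ∀ D : Pt →₀ ℤ, 2 * (t : ℤ) - 2 < divDeg k res D →
      (Module.finrank k (L D) : ℤ) = divDeg k res D + 1 - t

/-- `T` is the tame symbol `K₂(F) → ∐_{P} k(P)^*`: it is determined by
`T_P({f,g}) = (-1)^{ord_P(f)·ord_P(g)} (f^{ord_P(g)} / g^{ord_P(f)})(P)`. -/
def IsTameSymbol {F : Type*} [Field F] {Pt : Type*} {res : Pt → Type*}
    [∀ P, Field (res P)]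
    (ord : Pt → F → ℤ) (ev : ∀ P, F → res P)
    (T : K2 F →+ Π₀ P : Pt, Additive ((res P)ˣ)) : Prop :=
  ∀ (f g : Fˣ) (P : Pt),
    ((Additive.toMul (T (symbol f g) P) : (res P)ˣ) : res P) =
      ev P (((-1 : Fˣ) ^ (ord P (f : F) * ord P (g : F)) *
        f ^ (ord P (g : F)) * g ^ (-ord P (f : F)) : Fˣ) : F)

set_option linter.unusedSectionVars false
section
section AuxDev

variable {k F : Type*} [Field k] [Field F] [Algebra k F]
    {Pt : Type*} {res : Pt → Type*} [∀ P, Field (res P)] [∀ P, Algebra k (res P)]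
    {ord : Pt → F → ℤ} {ev : ∀ P, F → res P}
    {L : (Pt →₀ ℤ) → Submodule k F} {t : ℕ}

variable (hC : IsProjCurve k F res ord ev L t)
include hC

section OrdEv
variable (P : Pt)

lemma aux_ord_one : ord P (1 : F) = 0 := by
  have := hC.ord_mul P 1 1 one_ne_zero one_ne_zero
  rw [mul_one] at this; omega

lemma aux_ord_inv {f : F} (hf : f ≠ 0) : ord P f⁻¹ = - ord P f := by
  have := hC.ord_mul P f f⁻¹ hf (inv_ne_zero hf)
  rw [mul_inv_cancel₀ hf, aux_ord_one hC] at this; omega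

lemma aux_ord_pow {f : F} (hf : f ≠ 0) (m : ℕ) : ord P (f ^ m) = m * ord P f := by
  induction m with
  | zero => simpa using aux_ord_one hC P
  | succ m ih =>
      rw [pow_succ, hC.ord_mul P _ f (pow_ne_zero m hf) hf, ih]
      push_cast; ring

lemma aux_ord_zpow {f : F} (hf : f ≠ 0) (m : ℤ) : ord P (f ^ m) = m * ord P f := by
  cases m with
  | ofNat m => simpa using aux_ord_pow hC P hf m
  | negSucc m =>
      rw [zpow_negSucc, aux_ord_inv hC P (pow_ne_zero _ hf), aux_ord_pow hC P hf,
        Int.negSucc_eq]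
      push_cast; ring

lemma aux_ev_ne_zero {f : F} (hf : f ≠ 0) (h0 : ord P f = 0) : ev P f ≠ 0 := by
  intro h
  have := (hC.ev_eq_zero_iff P f hf (le_of_eq h0.symm)).mp h
  omega

lemma aux_ev_mul0 {f g : F} (hf : f ≠ 0) (hg : g ≠ 0) (h0 : ord P f = 0)
    (h0' : ord P g = 0) : ev P (f * g) = ev P f * ev P g :=
  hC.ev_mul P f g hf hg (le_of_eq h0.symm) (le_of_eq h0'.symm)

lemma aux_ev_inv {f : F} (hf : f ≠ 0) (h0 : ord P f = 0) :
    ev P f⁻¹ = (ev P f)⁻¹ := by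
  have hinv : ord P f⁻¹ = 0 := by rw [aux_ord_inv hC P hf, h0]; ring
  have h2 : ev P f * ev P f⁻¹ = 1 := by
    rw [← aux_ev_mul0 hC P hf (inv_ne_zero hf) h0 hinv, mul_inv_cancel₀ hf, hC.ev_one]
  exact eq_inv_of_mul_eq_one_left (by rw [mul_comm] at h2; exact h2)

lemma aux_ev_pow {f : F} (hf : f ≠ 0) (h0 : ord P f = 0) (m : ℕ) :
    ev P (f ^ m) = (ev P f) ^ m := by
  induction m with
  | zero => simpa using hC.ev_one P
  | succ m ih =>
      have hp : ord P (f ^ m) = 0 := by rw [aux_ord_pow hC P hf, h0]; ring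
      rw [pow_succ, aux_ev_mul0 hC P (pow_ne_zero m hf) hf hp h0, ih, pow_succ]

lemma aux_ev_zpow {f : F} (hf : f ≠ 0) (h0 : ord P f = 0) (m : ℤ) :
    ev P (f ^ m) = (ev P f) ^ m := by
  cases m with
  | ofNat m => simpa using aux_ev_pow hC P hf h0 m
  | negSucc m =>
      rw [zpow_negSucc, zpow_negSucc,
        aux_ev_inv hC P (pow_ne_zero _ hf) (by rw [aux_ord_pow hC P hf, h0]; ring),
        aux_ev_pow hC P hf h0]

lemma aux_ord_neg_one : ord P (-1 : F) = 0 := by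
  have := hC.ord_mul P (-1) (-1) (by norm_num) (by norm_num)
  rw [neg_one_mul, neg_neg] at this
  have h1 := aux_ord_one hC P
  omega

lemma aux_ev_neg_one : ev P (-1 : F) = -1 := by
  have h := hC.ev_algebraMap P (-1)
  rw [map_neg, map_neg, map_one, map_one] at h
  exact h

end OrdEv


section Deg

omit hC in lemma divDeg_eq_sum (DD : Pt →₀ ℤ) (s : Finset Pt) (hs : DD.support ⊆ s) :
    divDeg k res DD = ∑ P ∈ s, (Module.finrank k (res P) : ℤ) * DD P := by
  apply finsum_eq_finset_sum_of_support_subset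
  intro x hx
  simp only [Function.mem_support, ne_eq] at hx
  have hD : DD x ≠ 0 := by intro h; exact hx (by rw [h, mul_zero])
  exact hs (Finsupp.mem_support_iff.mpr hD)

omit hC in lemma divDeg_smul (DD : Pt →₀ ℤ) (M : ℤ) :
    divDeg k res (M • DD) = M * divDeg k res DD := by
  classical
  have hsupp : (M • DD).support ⊆ DD.support := by
    intro Q hQ
    simp only [Finsupp.mem_support_iff, Finsupp.smul_apply, smul_eq_mul] at hQ ⊢
    intro h; exact hQ (by rw [h, mul_zero])
  rw [divDeg_eq_sum (M • DD) DD.support hsupp,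
    divDeg_eq_sum DD DD.support subset_rfl, Finset.mul_sum]
  apply Finset.sum_congr rfl
  intro Q _
  simp only [Finsupp.smul_apply, smul_eq_mul]
  ring

omit hC in lemma divDeg_smul_sub_single (DD : Pt →₀ ℤ) (M : ℤ) (P : Pt) :
    divDeg k res (M • DD - Finsupp.single P 1)
      = M * divDeg k res DD - (Module.finrank k (res P) : ℤ) := by
  classical
  set s : Finset Pt := insert P DD.support with hs
  have hsub : (M • DD - Finsupp.single P 1).support ⊆ s := by
    intro Q hQ
    simp only [Finsupp.mem_support_iff, Finsupp.sub_apply, Finsupp.smul_apply,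
      smul_eq_mul, Finsupp.single_apply] at hQ
    by_cases hQP : Q = P
    · rw [hQP]; exact Finset.mem_insert_self P DD.support
    · apply Finset.mem_insert_of_mem
      rw [Finsupp.mem_support_iff]
      intro h
      apply hQ
      rw [h, mul_zero, if_neg (fun hh => hQP hh.symm), sub_zero]
  rw [divDeg_eq_sum _ s hsub]
  have h2 : ∀ Q ∈ s, (Module.finrank k (res Q) : ℤ) * ((M • DD - Finsupp.single P 1 : Pt →₀ ℤ) Q)
      = M * ((Module.finrank k (res Q) : ℤ) * DD Q)
        - (if P = Q then (Module.finrank k (res Q) : ℤ) else 0) := by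
    intro Q _
    simp only [Finsupp.sub_apply, Finsupp.smul_apply, smul_eq_mul, Finsupp.single_apply]
    by_cases h : P = Q <;> simp [h] <;> ring
  rw [Finset.sum_congr rfl h2, Finset.sum_sub_distrib, ← Finset.mul_sum,
    Finset.sum_ite_eq, if_pos (Finset.mem_insert_self P DD.support),
    ← divDeg_eq_sum DD s (Finset.subset_insert P DD.support)]

lemma aux_key_sum {E : Pt →₀ ℤ} {f : F} (hf : f ≠ 0)
    (s : Finset Pt) (hs1 : E.support ⊆ s) (hs2 : (hC.support_finite f hf).toFinset ⊆ s) :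
    ∑ Q ∈ s, (Module.finrank k (res Q) : ℤ) * (E Q + ord Q f) = divDeg k res E := by
  classical
  have e1 : ∀ Q ∈ s, (Module.finrank k (res Q) : ℤ) * (E Q + ord Q f)
      = (Module.finrank k (res Q) : ℤ) * E Q + (Module.finrank k (res Q) : ℤ) * ord Q f := by
    intro Q _; ring
  rw [Finset.sum_congr rfl e1, Finset.sum_add_distrib]
  have e3 : ∑ Q ∈ s, (Module.finrank k (res Q) : ℤ) * ord Q f = 0 := by
    rw [← finsum_eq_finset_sum_of_support_subset _ (s := s)
      (by
        intro x hx
        simp only [Function.mem_support, ne_eq] at hx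
        apply hs2
        simp only [Set.Finite.mem_toFinset, Set.mem_setOf_eq]
        intro h; exact hx (by rw [h, mul_zero]))]
    exact hC.degree_formula f hf
  rw [e3, ← divDeg_eq_sum E s hs1, add_zero]

lemma aux_wbound_single {E : Pt →₀ ℤ} {f : F} (hf : f ≠ 0)
    (hmem : ∀ Q, 0 ≤ E Q + ord Q f) (R : Pt) :
    (Module.finrank k (res R) : ℤ) * (E R + ord R f) ≤ divDeg k res E := by
  classical
  set s : Finset Pt := insert R (E.support ∪ (hC.support_finite f hf).toFinset) with hsdef
  rw [← aux_key_sum hC hf s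
    (by intro x hx; exact Finset.mem_insert_of_mem (Finset.mem_union_left _ hx))
    (by intro x hx; exact Finset.mem_insert_of_mem (Finset.mem_union_right _ hx))]
  apply Finset.single_le_sum (f := fun Q => (Module.finrank k (res Q) : ℤ) * (E Q + ord Q f))
  · intro Q _
    exact mul_nonneg (Int.natCast_nonneg _) (hmem Q)
  · exact Finset.mem_insert_self R _

lemma aux_divDeg_nonneg {E : Pt →₀ ℤ} {f : F} (hf : f ≠ 0)
    (hmem : ∀ Q, 0 ≤ E Q + ord Q f) : 0 ≤ divDeg k res E := by
  classical
  rw [← aux_key_sum hC hf (E.support ∪ (hC.support_finite f hf).toFinset)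
    (Finset.subset_union_left) (Finset.subset_union_right)]
  apply Finset.sum_nonneg
  intro Q _
  exact mul_nonneg (Int.natCast_nonneg _) (hmem Q)

lemma aux_ne_bot {E : Pt →₀ ℤ} (h : (t : ℤ) ≤ divDeg k res E) : L E ≠ ⊥ := by
  intro hb
  have h2 := hC.rr_ineq E
  rw [hb, finrank_bot] at h2
  push_cast at h2
  omega

lemma aux_bot_bound {E : Pt →₀ ℤ} (h : L E = ⊥) : divDeg k res E ≤ (t : ℤ) - 1 := by
  have h2 := hC.rr_ineq E
  rw [h, finrank_bot] at h2
  push_cast at h2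
  omega

lemma aux_deg_nonneg_of_ne_bot {E : Pt →₀ ℤ} (h : L E ≠ ⊥) : 0 ≤ divDeg k res E := by
  obtain ⟨f, hfL, hf⟩ := (Submodule.ne_bot_iff _).mp h
  exact aux_divDeg_nonneg hC hf (fun Q => (hC.mem_L E f).mp hfL hf Q)

lemma aux_deg_pos (P : Pt) : 1 ≤ (Module.finrank k (res P) : ℤ) := by
  haveI := hC.finiteDimensional_res P
  have h : 0 < Module.finrank k (res P) := Module.finrank_pos
  omega

end Deg


section Ratio

lemma aux_exists_ratio {E : Pt →₀ ℤ} {P : Pt} (hEP : E P = 0)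
    (hinj : L (E - Finsupp.single P 1) = ⊥)
    (hdim : (Module.finrank k (res P) : ℤ) < 2 * (Module.finrank k (L E) : ℤ))
    (α : (res P)ˣ) :
    ∃ g g' : F, g ≠ 0 ∧ g' ≠ 0 ∧ g ∈ L E ∧ g' ∈ L E ∧
      ord P g = 0 ∧ ord P g' = 0 ∧ ev P g' = (α : res P) * ev P g := by
  classical
  haveI := hC.finiteDimensional_res P
  haveI := hC.finiteDimensional_L E
  have hordnn : ∀ f : F, f ∈ L E → f ≠ 0 → 0 ≤ ord P f := by
    intro f hfL hf
    have h := (hC.mem_L E f).mp hfL hf P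
    rw [hEP] at h
    simpa using h
  let ψ : (L E) →ₗ[k] res P :=
    { toFun := fun f => ev P (f : F)
      map_add' := by
        rintro ⟨f, hf⟩ ⟨g, hg⟩
        show ev P (f + g) = ev P f + ev P g
        by_cases hf0 : f = 0
        · subst hf0; rw [zero_add, hC.ev_zero, zero_add]
        by_cases hg0 : g = 0
        · subst hg0; rw [add_zero, hC.ev_zero, add_zero]
        exact hC.ev_add P f g hf0 hg0 (hordnn f hf hf0) (hordnn g hg hg0)
      map_smul' := by
        rintro c ⟨f, hf⟩
        show ev P (c • f) = c • ev P f
        by_cases hc : c = 0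
        · subst hc; rw [zero_smul, zero_smul, hC.ev_zero]
        by_cases hf0 : f = 0
        · subst hf0; rw [smul_zero, hC.ev_zero, smul_zero]
        have halg : algebraMap k F c ≠ 0 := by
          simp only [ne_eq, map_eq_zero]; exact hc
        rw [Algebra.smul_def, Algebra.smul_def,
          hC.ev_mul P _ f halg hf0 (le_of_eq (hC.ord_algebraMap P c hc).symm)
            (hordnn f hf hf0), hC.ev_algebraMap] }
  have hψapp : ∀ x : L E, ψ x = ev P (x : F) := fun x => rfl
  have hψinj : Function.Injective ψ := by
    rw [injective_iff_map_eq_zero]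
    rintro ⟨f, hfL⟩ hx
    rw [hψapp] at hx
    apply Subtype.ext
    show f = 0
    by_contra hf0
    have hge := hordnn f hfL hf0
    have hgt := (hC.ev_eq_zero_iff P f hf0 hge).mp hx
    have hmem2 : f ∈ L (E - Finsupp.single P 1) := by
      rw [hC.mem_L]
      intro _ Q
      rw [Finsupp.sub_apply, Finsupp.single_apply]
      by_cases hQ : P = Q
      · subst hQ; rw [hEP]; simpa using (by omega : 1 ≤ ord P f)
      · rw [if_neg hQ, sub_zero]; exact (hC.mem_L E f).mp hfL hf0 Q
    rw [hinj, Submodule.mem_bot] at hmem2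
    exact hf0 hmem2
  let μ : res P ≃ₗ[k] res P :=
    { toFun := fun x => (α : res P) * x
      invFun := fun x => ((α⁻¹ : (res P)ˣ) : res P) * x
      map_add' := by intro x y; ring
      map_smul' := by intro c x; simp [mul_smul_comm]
      left_inv := by
        intro x
        show ((α⁻¹ : (res P)ˣ) : res P) * ((α : res P) * x) = x
        rw [← mul_assoc, Units.inv_mul, one_mul]
      right_inv := by
        intro x
        show (α : res P) * (((α⁻¹ : (res P)ˣ) : res P) * x) = x
        rw [← mul_assoc, Units.mul_inv, one_mul] }
  set V := LinearMap.range ψ with hVdef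
  have hVrank : Module.finrank k V = Module.finrank k (L E) :=
    LinearMap.finrank_range_of_inj hψinj
  set W := V.map (μ : res P ≃ₗ[k] res P).toLinearMap with hWdef
  have hWrank : Module.finrank k W = Module.finrank k V :=
    ((Submodule.equivMapOfInjective _ μ.injective V).symm).finrank_eq
  have hsup : Module.finrank k ↥(V ⊔ W) ≤ Module.finrank k (res P) :=
    Submodule.finrank_le _
  have hinfsum := Submodule.finrank_sup_add_finrank_inf_eq V W
  have hdimn : Module.finrank k (res P) < 2 * Module.finrank k (L E) := by
    exact_mod_cast hdim
  have hpos : 0 < Module.finrank k ↥(V ⊓ W) := by omega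
  have hne : (V ⊓ W) ≠ ⊥ := by
    intro h
    rw [h, finrank_bot] at hpos
    omega
  obtain ⟨ξ, hξmem, hξ0⟩ := (Submodule.ne_bot_iff _).mp hne
  obtain ⟨hξV, hξW⟩ := Submodule.mem_inf.mp hξmem
  obtain ⟨g', hg'⟩ := LinearMap.mem_range.mp hξV
  obtain ⟨η, hηV, hηξ⟩ := Submodule.mem_map.mp hξW
  obtain ⟨g, hg⟩ := LinearMap.mem_range.mp hηV
  have hevg : ev P (g : F) = η := by rw [← hψapp]; exact hg
  have hevg' : ev P (g' : F) = ξ := by rw [← hψapp]; exact hg'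
  have hη0 : η ≠ 0 := by
    intro h
    apply hξ0
    rw [← hηξ, h]
    exact map_zero _
  have hg0 : (g : F) ≠ 0 := by
    intro h
    apply hη0
    rw [← hevg, h, hC.ev_zero]
  have hg'0 : (g' : F) ≠ 0 := by
    intro h
    apply hξ0
    rw [← hevg', h, hC.ev_zero]
  have hordg : ord P (g : F) = 0 := by
    have h1 := hordnn g g.2 hg0
    have h2 : ¬ (0 < ord P (g : F)) := by
      intro h
      exact hη0 (hevg ▸ (hC.ev_eq_zero_iff P g hg0 h1).mpr h)
    omega
  have hordg' : ord P (g' : F) = 0 := by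
    have h1 := hordnn g' g'.2 hg'0
    have h2 : ¬ (0 < ord P (g' : F)) := by
      intro h
      exact hξ0 (hevg' ▸ (hC.ev_eq_zero_iff P g' hg'0 h1).mpr h)
    omega
  refine ⟨g, g', hg0, hg'0, g.2, g'.2, hordg, hordg', ?_⟩
  rw [hevg', hevg, ← hηξ]
  rfl

end Ratio


section Tame

variable {T : K2 F →+ Π₀ P : Pt, Additive ((res P)ˣ)} (hT : IsTameSymbol ord ev T)
include hT

lemma aux_tame_P {f g : Fˣ} {P : Pt} (hf : ord P (f : F) = 1) (hg : ord P (g : F) = 0) :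
    ((Additive.toMul (T (symbol f g) P) : (res P)ˣ) : res P) = (ev P ((g : F)))⁻¹ := by
  rw [hT f g P, hf, hg]
  have h1 : ((-1 : Fˣ) ^ ((1:ℤ) * (0:ℤ)) * f ^ (0:ℤ) * g ^ (-(1:ℤ)) : Fˣ) = g⁻¹ := by
    norm_num
  rw [h1, Units.val_inv_eq_inv_val]
  exact aux_ev_inv hC P (Units.ne_zero g) hg

lemma aux_tame_Q {f g : Fˣ} {P : Pt} (hf : ord P (f : F) = 0) :
    ((Additive.toMul (T (symbol f g) P) : (res P)ˣ) : res P)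
      = (ev P ((f : F))) ^ (ord P (g : F)) := by
  rw [hT f g P, hf]
  have h1 : ((-1 : Fˣ) ^ ((0:ℤ) * ord P (g:F)) * f ^ (ord P (g:F)) * g ^ (-(0:ℤ)) : Fˣ)
      = f ^ (ord P (g:F)) := by
    norm_num
  rw [h1, Units.val_zpow_eq_zpow_val]
  exact aux_ev_zpow hC P (Units.ne_zero f) hf _

end Tame

section MinM

lemma aux_exists_minM (D : Pt →₀ ℤ) (e : ℤ) (he : divDeg k res D = e) (he1 : 1 ≤ e)
    (Q : Pt) :
    ∃ M : ℤ, 1 ≤ M ∧ (L (M • D - Finsupp.single Q 1) ≠ ⊥) ∧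
      (∀ m : ℤ, L (m • D - Finsupp.single Q 1) ≠ ⊥ → M ≤ m) := by
  classical
  have hdegQ := aux_deg_pos hC Q
  have hbdd : ∀ m : ℤ, L (m • D - Finsupp.single Q 1) ≠ ⊥ → 1 ≤ m := by
    intro m hm
    have h0 := aux_deg_nonneg_of_ne_bot hC hm
    rw [divDeg_smul_sub_single, he] at h0
    nlinarith
  have hinh : ∃ m : ℤ, L (m • D - Finsupp.single Q 1) ≠ ⊥ := by
    refine ⟨(t : ℤ) + (Module.finrank k (res Q) : ℤ), aux_ne_bot hC ?_⟩
    rw [divDeg_smul_sub_single, he]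
    nlinarith [Int.natCast_nonneg t]
  obtain ⟨M, hM1, hM2⟩ := Int.exists_least_of_bdd
    (P := fun m => L (m • D - Finsupp.single Q 1) ≠ ⊥) ⟨1, hbdd⟩ hinh
  exact ⟨M, hbdd M hM1, hM1, hM2⟩

end MinM


section Main

variable {T : K2 F →+ Π₀ P : Pt, Additive ((res P)ˣ)} (hT : IsTameSymbol ord ev T)
include hT

lemma aux_main (D : Pt →₀ ℤ) (e : ℤ) (he : divDeg k res D = e) (he1 : 1 ≤ e)
    (n : ℤ) (hn : 2 * (t : ℤ) + e - 2 < n * e)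
    (Stilde : Set Pt)
    (hSt : Stilde = {P | D P ≠ 0} ∪ {P | L (n • D - Finsupp.single P 1) ≠ ⊥}) :
    ∀ N : ℕ, ∀ P, P ∉ Stilde →
      ∀ M : ℤ, (L (M • D - Finsupp.single P 1) ≠ ⊥) →
        (∀ m : ℤ, L (m • D - Finsupp.single P 1) ≠ ⊥ → M ≤ m) →
        M.toNat ≤ N →
      ∀ α : ((res P)ˣ), ∃ x : K2 F,
        T x P = Additive.ofMul α ∧ ∀ Q, Q ∉ Stilde → Q ≠ P → T x Q = 0 := by
  classical
  have hQDbot : ∀ Q, Q ∉ Stilde → D Q = 0 ∧ L (n • D - Finsupp.single Q 1) = ⊥ := by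
    intro Q hQS
    rw [hSt, Set.mem_union] at hQS
    push_neg at hQS
    obtain ⟨h1, h2⟩ := hQS
    rw [Set.mem_setOf_eq, not_not] at h1 h2
    exact ⟨h1, h2⟩
  intro N
  induction N with
  | zero =>
    intro P hP M hM hMmin hMN α
    exfalso
    have h0 := aux_deg_nonneg_of_ne_bot hC hM
    rw [divDeg_smul_sub_single, he] at h0
    have h1 : 1 ≤ M := by nlinarith [aux_deg_pos hC P]
    omega
  | succ N ih =>
    intro P hP M hM hMmin hMN α
    obtain ⟨hPD, hPL⟩ := hQDbot P hP
    set degP : ℤ := (Module.finrank k (res P) : ℤ) with hdegPdef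
    have hdegP1 : 1 ≤ degP := aux_deg_pos hC P
    have hs_le : n * e + 1 - t ≤ degP := by
      have hb := aux_bot_bound hC hPL
      rw [divDeg_smul_sub_single, he] at hb
      omega
    set lam : ℤ := max (M - 1) n with hlam
    have hlam_n : n ≤ lam := le_max_right _ _
    have hlam_M : M - 1 ≤ lam := le_max_left _ _
    have hlam_bot : L (lam • D - Finsupp.single P 1) = ⊥ := by
      rcases max_choice (M - 1) n with hh | hh
      · rw [← hlam] at hh
        rw [hh]
        by_contra hne
        have := hMmin (M - 1) hne
        omega
      · rw [← hlam] at hh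
        rw [hh]
        exact hPL
    have hlam_e : 2 * (t : ℤ) + e - 2 < lam * e := by
      have h2 := mul_le_mul_of_nonneg_right hlam_n (by omega : (0:ℤ) ≤ e)
      linarith
    haveI := hC.finiteDimensional_L (lam • D)
    have hrank : (Module.finrank k (L (lam • D)) : ℤ) = lam * e + 1 - t := by
      have h2 : 2 * (t : ℤ) - 2 < divDeg k res (lam • D) := by
        rw [divDeg_smul, he]; linarith
      rw [hC.rr_eq _ h2, divDeg_smul, he]
    have hdeg_ge : lam * e + 1 - t ≤ degP := by
      have hb := aux_bot_bound hC hlam_bot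
      rw [divDeg_smul_sub_single, he] at hb
      omega
    have hdeg_le : degP ≤ M * e := by
      have hb := aux_deg_nonneg_of_ne_bot hC hM
      rw [divDeg_smul_sub_single, he] at hb
      omega
    have hMe_lame : M * e ≤ lam * e + e := by
      have h2 := mul_le_mul_of_nonneg_right (by omega : M ≤ lam + 1) (by omega : (0:ℤ) ≤ e)
      nlinarith
    have hdim : degP < 2 * (Module.finrank k (L (lam • D)) : ℤ) := by
      rw [hrank]; linarith
    have hEP : (lam • D) P = 0 := by
      rw [Finsupp.smul_apply, hPD, smul_zero]
    obtain ⟨g, g', hg0, hg'0, hgL, hg'L, hordg, hordg', hev⟩ :=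
      aux_exists_ratio hC hEP hlam_bot hdim α
    obtain ⟨h, hhL, hh0⟩ := (Submodule.ne_bot_iff _).mp hM
    have hmemh := (hC.mem_L _ h).mp hhL hh0
    have hcoefP : (M • D - Finsupp.single P 1 : Pt →₀ ℤ) P = -1 := by
      rw [Finsupp.sub_apply, Finsupp.smul_apply, hPD, smul_zero, Finsupp.single_apply,
        if_pos rfl]
      ring
    have hordh_ge : 1 ≤ ord P h := by
      have h2 := hmemh P
      rw [hcoefP] at h2
      omega
    have hwb := aux_wbound_single hC hh0 hmemh P
    rw [divDeg_smul_sub_single, he, hcoefP] at hwb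
    have hordh : ord P h = 1 := by
      by_contra hne
      have h2 : 2 ≤ ord P h := by omega
      have h3 : degP ≤ degP * (-1 + ord P h) := le_mul_of_one_le_right (by omega) (by omega)
      linarith
    have hordhQ : ∀ Q, Q ∉ Stilde → Q ≠ P → ord Q h = 0 := by
      intro Q hQS hQP
      obtain ⟨hQD, hQL⟩ := hQDbot Q hQS
      have hcoefQ : (M • D - Finsupp.single P 1 : Pt →₀ ℤ) Q = 0 := by
        rw [Finsupp.sub_apply, Finsupp.smul_apply, hQD, smul_zero, Finsupp.single_apply,
          if_neg (fun hh => hQP hh.symm)]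
        ring
      have hge : 0 ≤ ord Q h := by
        have h2 := hmemh Q
        rw [hcoefQ] at h2
        omega
      by_contra hne
      have h1 : 1 ≤ ord Q h := by omega
      have hwbQ := aux_wbound_single hC hh0 hmemh Q
      rw [divDeg_smul_sub_single, he, hcoefQ] at hwbQ
      have hdegQ1 := aux_deg_pos hC Q
      have h3 : (Module.finrank k (res Q) : ℤ)
          ≤ (Module.finrank k (res Q) : ℤ) * (0 + ord Q h) :=
        le_mul_of_one_le_right (by omega) (by omega)
      have hdegQ_le : (Module.finrank k (res Q) : ℤ) ≤ e + t - 1 := by linarith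
      have h4 : (t : ℤ) ≤ divDeg k res (n • D - Finsupp.single Q 1) := by
        rw [divDeg_smul_sub_single, he]
        linarith
      exact (aux_ne_bot hC h4) hQL
    have hgmem := (hC.mem_L _ g).mp hgL hg0
    have hg'mem := (hC.mem_L _ g').mp hg'L hg'0
    have hordg_nn : ∀ Q, Q ∉ Stilde → 0 ≤ ord Q g := by
      intro Q hQS
      have h2 := hgmem Q
      rw [Finsupp.smul_apply, (hQDbot Q hQS).1, smul_zero] at h2
      omega
    have hordg'_nn : ∀ Q, Q ∉ Stilde → 0 ≤ ord Q g' := by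
      intro Q hQS
      have h2 := hg'mem Q
      rw [Finsupp.smul_apply, (hQDbot Q hQS).1, smul_zero] at h2
      omega
    have hgzero : ∀ (gg : F), gg ≠ 0 → gg ∈ L (lam • D) → ∀ Q, Q ∉ Stilde → 0 < ord Q gg →
        L (lam • D - Finsupp.single Q 1) ≠ ⊥ := by
      intro gg hgg0 hggL Q hQS hpos
      apply (Submodule.ne_bot_iff _).mpr
      refine ⟨gg, ?_, hgg0⟩
      rw [hC.mem_L]
      intro _ R
      rw [Finsupp.sub_apply, Finsupp.single_apply]
      by_cases hR : Q = R
      · subst hR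
        rw [if_pos rfl, Finsupp.smul_apply, (hQDbot Q hQS).1, smul_zero]
        omega
      · rw [if_neg hR, sub_zero]
        exact (hC.mem_L _ gg).mp hggL hgg0 R
    set Bset : Finset Pt :=
      (((hC.support_finite g hg0).union (hC.support_finite g' hg'0)).toFinset).filter
        (fun Q => Q ∉ Stilde ∧ Q ≠ P) with hBdef
    have hBmem : ∀ Q, Q ∈ Bset ↔ ((ord Q g ≠ 0 ∨ ord Q g' ≠ 0) ∧ Q ∉ Stilde ∧ Q ≠ P) := by
      intro Q
      rw [hBdef, Finset.mem_filter, Set.Finite.mem_toFinset]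
      simp [Set.mem_union, Set.mem_setOf_eq]
    have hcorr : ∀ Q, Q ∈ Bset →
        ∃ x : K2 F,
          ((Additive.toMul (T x Q) : (res Q)ˣ) : res Q) = (ev Q h) ^ (ord Q g' - ord Q g) ∧
          ∀ R, R ∉ Stilde → R ≠ Q → T x R = 0 := by
      intro Q hQB
      obtain ⟨hQne, hQS, hQP⟩ := (hBmem Q).mp hQB
      have hordh0 : ord Q h = 0 := hordhQ Q hQS hQP
      have hvne : ev Q h ≠ 0 := aux_ev_ne_zero hC Q hh0 hordh0
      have hlamQ : L (lam • D - Finsupp.single Q 1) ≠ ⊥ := by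
        rcases hQne with h1 | h1
        · exact hgzero g hg0 hgL Q hQS (by have := hordg_nn Q hQS; omega)
        · exact hgzero g' hg'0 hg'L Q hQS (by have := hordg'_nn Q hQS; omega)
      have hlamM : lam = M - 1 := by
        rcases max_choice (M - 1) n with hh | hh
        · rw [← hlam] at hh; exact hh
        · rw [← hlam] at hh
          exfalso
          rw [hh] at hlamQ
          exact hlamQ (hQDbot Q hQS).2
      obtain ⟨MQ, hMQ1, hMQ2, hMQ3⟩ := aux_exists_minM hC D e he he1 Q
      have hMQle : MQ ≤ M - 1 := by
        have := hMQ3 lam hlamQ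
        omega
      obtain ⟨x, hxQ, hxR⟩ := ih Q hQS MQ hMQ2 hMQ3 (by omega)
        ((Units.mk0 (ev Q h) hvne) ^ (ord Q g' - ord Q g))
      refine ⟨x, ?_, hxR⟩
      rw [hxQ, toMul_ofMul, Units.val_zpow_eq_zpow_val, Units.val_mk0]
    choose xf hx1 hx2 using hcorr
    set uh : Fˣ := Units.mk0 h hh0 with huh
    set ug : Fˣ := Units.mk0 g hg0 with hug
    set ug' : Fˣ := Units.mk0 g' hg'0 with hug'
    have huhc : ((uh : Fˣ) : F) = h := rfl
    have hugc : ((ug : Fˣ) : F) = g := rfl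
    have hug'c : ((ug' : Fˣ) : F) = g' := rfl
    refine ⟨symbol uh ug - symbol uh ug' + ∑ q ∈ Bset.attach, xf q.1 q.2, ?_, ?_⟩
    · -- value at P
      rw [map_add, map_sub, map_sum, DFinsupp.add_apply, DFinsupp.sub_apply,
        DFinsupp.finset_sum_apply]
      have hsum0 : (∑ q ∈ Bset.attach, (T (xf q.1 q.2)) P) = 0 := by
        apply Finset.sum_eq_zero
        intro q _
        exact hx2 q.1 q.2 P hP (fun hh => ((hBmem q.1).mp q.2).2.2 hh.symm)
      rw [hsum0, add_zero]
      apply Additive.toMul.injective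
      apply Units.ext
      rw [toMul_sub, toMul_ofMul, Units.val_div_eq_div_val]
      rw [aux_tame_P hC hT (by rw [huhc]; exact hordh) (by rw [hugc]; exact hordg),
        aux_tame_P hC hT (by rw [huhc]; exact hordh) (by rw [hug'c]; exact hordg')]
      rw [hugc, hug'c, hev]
      have hevg_ne : ev P g ≠ 0 := aux_ev_ne_zero hC P hg0 hordg
      have hα_ne : ((α : (res P)ˣ) : res P) ≠ 0 := Units.ne_zero α
      field_simp
    · -- value at other points
      intro Q hQS hQP
      rw [map_add, map_sub, map_sum, DFinsupp.add_apply, DFinsupp.sub_apply,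
        DFinsupp.finset_sum_apply]
      have hordh0 : ord Q h = 0 := hordhQ Q hQS hQP
      have hvne : ev Q h ≠ 0 := aux_ev_ne_zero hC Q hh0 hordh0
      by_cases hQB : Q ∈ Bset
      · have hsum : (∑ q ∈ Bset.attach, (T (xf q.1 q.2)) Q) = (T (xf Q hQB)) Q := by
          apply Finset.sum_eq_single_of_mem ⟨Q, hQB⟩ (Finset.mem_attach _ _)
          intro b _ hb
          exact hx2 b.1 b.2 Q hQS (fun hh => hb (Subtype.ext hh.symm))
        rw [hsum]
        apply Additive.toMul.injective
        apply Units.ext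
        rw [toMul_add, toMul_sub, toMul_zero, Units.val_mul, Units.val_div_eq_div_val]
        rw [aux_tame_Q hC hT (f := uh) (g := ug) (by rw [huhc]; exact hordh0),
          aux_tame_Q hC hT (f := uh) (g := ug') (by rw [huhc]; exact hordh0)]
        rw [hx1 Q hQB, huhc, hugc, hug'c, Units.val_one]
        rw [div_mul_eq_mul_div, ← zpow_add₀ hvne, div_eq_iff (zpow_ne_zero _ hvne), one_mul]
        congr 1
        ring
      · have hsum : (∑ q ∈ Bset.attach, (T (xf q.1 q.2)) Q) = 0 := by
          apply Finset.sum_eq_zero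
          intro q _
          exact hx2 q.1 q.2 Q hQS (fun hh => hQB (hh ▸ q.2))
        rw [hsum, add_zero]
        have hg_or : ¬ ((ord Q g ≠ 0 ∨ ord Q g' ≠ 0) ∧ Q ∉ Stilde ∧ Q ≠ P) :=
          fun hh => hQB ((hBmem Q).mpr hh)
        have hgz : ord Q g = 0 ∧ ord Q g' = 0 := by
          by_contra hcon
          apply hg_or
          refine ⟨?_, hQS, hQP⟩
          tauto
        apply Additive.toMul.injective
        apply Units.ext
        rw [toMul_sub, toMul_zero, Units.val_div_eq_div_val]
        rw [aux_tame_Q hC hT (f := uh) (g := ug) (by rw [huhc]; exact hordh0),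
          aux_tame_Q hC hT (f := uh) (g := ug') (by rw [huhc]; exact hordh0)]
        rw [hugc, hug'c, hgz.1, hgz.2, zpow_zero, Units.val_one, div_one]

end Main

end AuxDev
end

/-- Proposition `introcoker`.  Let `C` be a regular, irreducible curve,
projective over a field `k`, with `H⁰(C,O_C) = k`, function field `F` and arithmetic
genus `t`.  Let `D` be a divisor of degree `e ≥ 1`, `n` the smallest integer with
`n·e > 2t + e - 2`, and `S̃ = |D| ∪ {P : H⁰(C, O_C(nD - P)) ≠ 0}`.  Then the map
`K₂(F) → ∐_{P ∉ S̃} k(P)^*` induced by the tame symbol is surjective, and the cokernel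
of the tame symbol is generated by the image of `∐_{P ∈ S̃} k(P)^*`. -/
theorem statement0 (k F : Type*) [Field k] [Field F] [Algebra k F]
    {Pt : Type*} (res : Pt → Type*) [∀ P, Field (res P)] [∀ P, Algebra k (res P)]
    (ord : Pt → F → ℤ) (ev : ∀ P, F → res P)
    (L : (Pt →₀ ℤ) → Submodule k F) (t : ℕ)
    (hC : IsProjCurve k F res ord ev L t)
    (T : K2 F →+ Π₀ P : Pt, Additive ((res P)ˣ)) (hT : IsTameSymbol ord ev T)
    (D : Pt →₀ ℤ) (e : ℤ) (he : divDeg k res D = e) (he1 : 1 ≤ e)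
    (n : ℤ) (hn : 2 * (t : ℤ) + e - 2 < n * e)
    (hnmin : ∀ m : ℤ, 2 * (t : ℤ) + e - 2 < m * e → n ≤ m)
    (Stilde : Set Pt)
    (hSt : Stilde = {P | D P ≠ 0} ∪ {P | L (n • D - Finsupp.single P 1) ≠ ⊥}) :
    (∀ y : Π₀ P : Pt, Additive ((res P)ˣ),
      ∃ x : K2 F, ∀ P ∉ Stilde, T x P = y P) ∧
    (∀ y : Π₀ P : Pt, Additive ((res P)ˣ),
      ∃ x : K2 F, ∃ z : Π₀ P : Pt, Additive ((res P)ˣ),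
        (∀ P ∉ Stilde, z P = 0) ∧ y = T x + z) := by
  classical
  have part1 : ∀ y : Π₀ P : Pt, Additive ((res P)ˣ),
      ∃ x : K2 F, ∀ P ∉ Stilde, T x P = y P := by
    intro y
    set Scomp : Finset Pt := y.support.filter (fun P => P ∉ Stilde) with hScomp
    have hmain := aux_main hC hT D e he he1 n hn Stilde hSt
    have hex : ∀ P, P ∈ Scomp → ∃ x : K2 F,
        T x P = y P ∧ ∀ Q, Q ∉ Stilde → Q ≠ P → T x Q = 0 := by
      intro P hP2
      have hPS : P ∉ Stilde := (Finset.mem_filter.mp hP2).2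
      obtain ⟨M, hM1, hM2, hM3⟩ := aux_exists_minM hC D e he he1 P
      obtain ⟨x, h1, h2⟩ := hmain M.toNat P hPS M hM2 hM3 le_rfl (Additive.toMul (y P))
      exact ⟨x, by rw [h1, ofMul_toMul], h2⟩
    choose xf h1 h2 using hex
    refine ⟨∑ q ∈ Scomp.attach, xf q.1 q.2, ?_⟩
    intro P hPS
    rw [map_sum, DFinsupp.finset_sum_apply]
    by_cases hPy : P ∈ Scomp
    · rw [Finset.sum_eq_single_of_mem ⟨P, hPy⟩ (Finset.mem_attach _ _)
        (fun b _ hb => h2 b.1 b.2 P hPS (fun hh => hb (Subtype.ext hh.symm)))]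
      exact h1 P hPy
    · have hy0 : y P = 0 := by
        by_contra hne
        exact hPy (Finset.mem_filter.mpr ⟨DFinsupp.mem_support_iff.mpr hne, hPS⟩)
      rw [hy0]
      apply Finset.sum_eq_zero
      intro b _
      exact h2 b.1 b.2 P hPS (fun hh => hPy (by rw [hh]; exact b.2))
  refine ⟨part1, ?_⟩
  intro y
  obtain ⟨x, hx⟩ := part1 y
  refine ⟨x, y - T x, ?_, by abel⟩
  intro P hPS
  rw [DFinsupp.sub_apply, hx P hPS, sub_self]

end
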